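/- Suppose T is a distribution on gl(n,ℝ) (or more simply, a C¹ function) satisfying L_{ij} T = 0 for 1 ≤ i ≤ n-1, 1 ≤ j ≤ n. Then for each 1 ≤ j ≤ n, the product D · (L_{nj} T) = 0, where D is the polynomial D(x) = det(rows e_n x^k, k = 0,…,n-1). Consequently L_{nj}T vanishes on Ω = {D ≠ 0}. -/

import Mathlib

attribute [local instance] Matrix.frobeniusNormedAddCommGroup Matrix.frobeniusNormedSpace

noncomputable def Dmat (n : ℕ) (x : Matrix (Fin (n+1)) (Fin (n+1)) ℝ) : ℝ :=
  (Matrix.of fun k j : Fin (n+1) =>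
    Matrix.vecMul (Pi.single (Fin.last n) 1) (x ^ (k : ℕ)) j).det

/-- Derivative of `T` along the adjoint vector field `x ↦ [E i j, x]`. -/
noncomputable def Lop (n : ℕ) (i j : Fin (n+1))
    (T : Matrix (Fin (n+1)) (Fin (n+1)) ℝ → ℝ)
    (x : Matrix (Fin (n+1)) (Fin (n+1)) ℝ) : ℝ :=
  deriv (fun t : ℝ => T (x + t • (Matrix.single i j (1:ℝ) * x
    - x * Matrix.single i j (1:ℝ)))) 0

lemma deriv_along (n : ℕ) (T : Matrix (Fin (n+1)) (Fin (n+1)) ℝ → ℝ)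
    (hT : ContDiff ℝ 1 T) (x d : Matrix (Fin (n+1)) (Fin (n+1)) ℝ) :
    deriv (fun t : ℝ => T (x + t • d)) 0 = fderiv ℝ T x d := by
  have hg : HasDerivAt (fun t : ℝ => x + t • d) d 0 := by
    exact (((hasDerivAt_id (0:ℝ)).smul_const d).const_add x).congr_deriv (one_smul ℝ d)
  have hf : HasFDerivAt T (fderiv ℝ T x) ((fun t : ℝ => x + t • d) 0) := by
    simp only [zero_smul, add_zero]
    exact ((hT.differentiable one_ne_zero) x).hasFDerivAt
  exact (hf.comp_hasDerivAt 0 hg).deriv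

lemma Lop_eq_fderiv (n : ℕ) (i j : Fin (n+1))
    (T : Matrix (Fin (n+1)) (Fin (n+1)) ℝ → ℝ) (hT : ContDiff ℝ 1 T)
    (x : Matrix (Fin (n+1)) (Fin (n+1)) ℝ) :
    Lop n i j T x = fderiv ℝ T x
      (Matrix.single i j (1:ℝ) * x - x * Matrix.single i j (1:ℝ)) :=
  deriv_along n T hT x _

theorem D_mul_LnjT_eq_zero (n : ℕ)
    (T : Matrix (Fin (n+1)) (Fin (n+1)) ℝ → ℝ) (hT : ContDiff ℝ 1 T)
    (hP : ∀ i j : Fin (n+1), i ≠ Fin.last n →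
      ∀ x : Matrix (Fin (n+1)) (Fin (n+1)) ℝ, Lop n i j T x = 0) :
    (∀ j : Fin (n+1), ∀ x : Matrix (Fin (n+1)) (Fin (n+1)) ℝ,
      Dmat n x * Lop n (Fin.last n) j T x = 0) ∧
    ∀ j : Fin (n+1), ∀ x : Matrix (Fin (n+1)) (Fin (n+1)) ℝ,
      Dmat n x ≠ 0 → Lop n (Fin.last n) j T x = 0 := by
  have key : ∀ j : Fin (n+1), ∀ x : Matrix (Fin (n+1)) (Fin (n+1)) ℝ,
      Dmat n x * Lop n (Fin.last n) j T x = 0 := by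
    intro j0 x
    -- the linear map A ↦ fderiv T x (A*x - x*A)
    set φ : Matrix (Fin (n+1)) (Fin (n+1)) ℝ →ₗ[ℝ] ℝ :=
      (fderiv ℝ T x).toLinearMap.comp
        (LinearMap.mulRight ℝ x - LinearMap.mulLeft ℝ x) with hφ
    have hφapp : ∀ A, φ A = fderiv ℝ T x (A * x - x * A) := by
      intro A; simp [hφ, LinearMap.mulRight_apply, LinearMap.mulLeft_apply]
    have hφE : ∀ i j : Fin (n+1),
        φ (Matrix.single i j (1:ℝ)) = Lop n i j T x := by
      intro i j; rw [hφapp, Lop_eq_fderiv n i j T hT]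
    have hφpow : ∀ k : ℕ, φ (x ^ k) = 0 := by
      intro k
      rw [hφapp, ((Commute.refl x).pow_left k).eq, sub_self, map_zero]
    set v : Fin (n+1) → ℝ := fun j => Lop n (Fin.last n) j T x with hv
    set M : Matrix (Fin (n+1)) (Fin (n+1)) ℝ :=
      Matrix.of (fun k j : Fin (n+1) => (x ^ (k : ℕ)) (Fin.last n) j) with hM
    have hMv : M.mulVec v = 0 := by
      funext k
      have h0 := hφpow (k : ℕ)
      rw [Matrix.matrix_eq_sum_single (x ^ (k : ℕ))] at h0
      rw [map_sum] at h0
      have h1 : ∀ i : Fin (n+1),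
          φ (∑ j : Fin (n+1), Matrix.single i j ((x ^ (k:ℕ)) i j))
          = if i = Fin.last n then ∑ j, (x ^ (k:ℕ)) i j * v j else 0 := by
        intro i
        rw [map_sum]
        by_cases hi : i = Fin.last n
        · subst hi
          simp only [if_true]
          refine Finset.sum_congr rfl fun j _ => ?_
          have hs : Matrix.single (Fin.last n) j ((x ^ (k:ℕ)) (Fin.last n) j)
              = ((x ^ (k:ℕ)) (Fin.last n) j) • Matrix.single (Fin.last n) j (1:ℝ) := by
            rw [Matrix.smul_single, smul_eq_mul, mul_one]
          rw [hs, map_smul, hφE]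
          simp [hv]
        · simp only [hi, if_false]
          refine Finset.sum_eq_zero fun j _ => ?_
          have hs : Matrix.single i j ((x ^ (k:ℕ)) i j)
              = ((x ^ (k:ℕ)) i j) • Matrix.single i j (1:ℝ) := by
            rw [Matrix.smul_single, smul_eq_mul, mul_one]
          rw [hs, map_smul, hφE, hP i j hi x, smul_zero]
      rw [Finset.sum_congr rfl (fun i _ => h1 i)] at h0
      rw [Finset.sum_ite_eq' Finset.univ (Fin.last n)
        (fun i => ∑ j, (x ^ (k:ℕ)) i j * v j)] at h0
      simp only [Finset.mem_univ, if_true] at h0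
      simpa [Matrix.mulVec, dotProduct, hM] using h0
    have hdet : M.det • v = 0 := by
      have h1 : M.adjugate.mulVec (M.mulVec v) = M.det • v := by
        rw [Matrix.mulVec_mulVec, Matrix.adjugate_mul, Matrix.smul_mulVec,
          Matrix.one_mulVec]
      rw [hMv, Matrix.mulVec_zero] at h1
      exact h1.symm
    have hD : Dmat n x = M.det := by
      unfold Dmat
      congr 1
      ext k j
      simp [hM, Matrix.single_one_vecMul]
    have := congrFun hdet j0
    rw [hD]
    simpa [hv] using this
  exact ⟨key, fun j x hD => (mul_eq_zero.mp (key j x)).resolve_left hD⟩
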